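/- Let P = (P_1,...,P_m) and Q = (Q_1,...,Q_n) be projective measurements on a finite-dimensional complex Hilbert space H, and let ψ be a unit vector. Then H(P,ψ) + H(Q,ψ) ≥ -2 log₂ max_{i,j} ‖P_i Q_j‖, where ‖·‖ denotes the operator norm. -/

import Mathlib

open Complex Finset Filter Set

section aux
variable {H : Type*} [NormedAddCommGroup H] [InnerProductSpace ℂ H] [CompleteSpace H]

lemma mu_aux_sym (A : H →L[ℂ] H) (hA : IsSelfAdjoint A) (x y : H) :
    (inner ℂ (A x) y : ℂ) = inner ℂ x (A y) := by
  conv_lhs => rw [← ContinuousLinearMap.isSelfAdjoint_iff'.mp hA]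
  exact ContinuousLinearMap.adjoint_inner_left A y x

lemma mu_aux_inner_sq (A : H →L[ℂ] H) (hA : IsSelfAdjoint A) (hAi : A ∘L A = A) (x : H) :
    (inner ℂ x (A x) : ℂ) = ((‖A x‖ ^ 2 : ℝ) : ℂ) := by
  have h1 : A (A x) = A x := by rw [← ContinuousLinearMap.comp_apply, hAi]
  calc (inner ℂ x (A x) : ℂ) = inner ℂ x (A (A x)) := by rw [h1]
    _ = inner ℂ (A x) (A x) := (mu_aux_sym A hA x (A x)).symm
    _ = ((‖A x‖ ^ 2 : ℝ) : ℂ) := by rw [inner_self_eq_norm_sq_to_K]; norm_cast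

lemma mu_aux_parseval {m : ℕ} (P : Fin m → H →L[ℂ] H) (hsa : ∀ i, IsSelfAdjoint (P i))
    (hidem : ∀ i, P i ∘L P i = P i) (hsum : ∑ i, P i = 1) (x : H) :
    ∑ i, ‖P i x‖ ^ 2 = ‖x‖ ^ 2 := by
  have hx : ∑ i, P i x = x := by
    rw [← ContinuousLinearMap.sum_apply, hsum, ContinuousLinearMap.one_apply]
  have h1 : ((‖x‖ ^ 2 : ℝ) : ℂ) = ((∑ i, ‖P i x‖ ^ 2 : ℝ) : ℂ) := by
    calc ((‖x‖ ^ 2 : ℝ) : ℂ) = inner ℂ x x := by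
          rw [inner_self_eq_norm_sq_to_K]; norm_cast
      _ = inner ℂ x (∑ i, P i x) := by rw [hx]
      _ = ∑ i, (inner ℂ x (P i x) : ℂ) := inner_sum _ _ _
      _ = ∑ i, ((‖P i x‖ ^ 2 : ℝ) : ℂ) :=
          Finset.sum_congr rfl fun i _ => mu_aux_inner_sq _ (hsa i) (hidem i) x
      _ = ((∑ i, ‖P i x‖ ^ 2 : ℝ) : ℂ) := (Complex.ofReal_sum _ _).symm
  exact_mod_cast h1.symm

lemma mu_aux_orth {m : ℕ} (P : Fin m → H →L[ℂ] H) (hsa : ∀ i, IsSelfAdjoint (P i))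
    (hidem : ∀ i, P i ∘L P i = P i) (hsum : ∑ i, P i = 1) (x : H) {i k : Fin m} (hik : i ≠ k) :
    (inner ℂ (P i x) (P k x) : ℂ) = 0 := by
  classical
  have h0 : P i (P k x) = 0 := by
    have hsum' := mu_aux_parseval P hsa hidem hsum (P k x)
    have hk : ‖P k (P k x)‖ ^ 2 = ‖P k x‖ ^ 2 := by
      rw [← ContinuousLinearMap.comp_apply, hidem k]
    have hins := Finset.add_sum_erase Finset.univ (fun i => ‖P i (P k x)‖ ^ 2) (Finset.mem_univ k)
    beta_reduce at hins
    have hrest : ∑ j ∈ Finset.univ.erase k, ‖P j (P k x)‖ ^ 2 = 0 := by linarith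
    have hz := (Finset.sum_eq_zero_iff_of_nonneg (fun j _ => sq_nonneg _)).mp hrest i
      (Finset.mem_erase.mpr ⟨hik, Finset.mem_univ _⟩)
    exact norm_eq_zero.mp (pow_eq_zero_iff two_ne_zero |>.mp hz)
  rw [mu_aux_sym (P i) (hsa i) x (P k x), h0, inner_zero_right]

end aux


lemma mu_core {m n : ℕ} (a : Fin m → Fin n → ℂ) (p : Fin m → ℝ) (q : Fin n → ℝ) (c : ℝ)
    (hc : 0 < c)
    (hp0 : ∀ i, 0 ≤ p i) (hq0 : ∀ j, 0 ≤ q j)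
    (hps : ∑ i, p i = 1) (hqs : ∑ j, q j = 1)
    (hrow : ∀ i, ∑ j, a i j = (p i : ℂ)) (hcol : ∀ j, ∑ i, a i j = (q j : ℂ))
    (habs : ∀ i j, ‖a i j‖ ≤ c * (Real.sqrt (p i) * Real.sqrt (q j)))
    (hCS : ∀ (lam : Fin m → ℂ) (mu : Fin n → ℂ),
      ‖∑ i, ∑ j, lam i * mu j * a i j‖ ≤
        Real.sqrt (∑ i, ‖lam i‖ ^ 2 * p i) *
        Real.sqrt (∑ j, ‖mu j‖ ^ 2 * q j)) :
    ∑ i, p i * Real.log (p i) + ∑ j, q j * Real.log (q j) ≤ 2 * Real.log c := by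
  classical
  set r : Fin m → ℝ := fun i => if p i = 0 then 1 else p i / c with hr_def
  set s : Fin n → ℝ := fun j => if q j = 0 then 1 else q j / c with hs_def
  have hr_pos : ∀ i, 0 < r i := by
    intro i; simp only [hr_def]
    split
    · exact one_pos
    · exact div_pos (lt_of_le_of_ne (hp0 i) (Ne.symm ‹_›)) hc
  have hs_pos : ∀ j, 0 < s j := by
    intro j; simp only [hs_def]
    split
    · exact one_pos
    · exact div_pos (lt_of_le_of_ne (hq0 j) (Ne.symm ‹_›)) hc
  have ha_p : ∀ i j, p i = 0 → a i j = 0 := by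
    intro i j h
    have := habs i j
    rw [h, Real.sqrt_zero] at this
    simpa using norm_eq_zero.mp (le_antisymm (by simpa using this) (norm_nonneg _))
  have ha_q : ∀ i j, q j = 0 → a i j = 0 := by
    intro i j h
    have := habs i j
    rw [h, Real.sqrt_zero] at this
    simpa using norm_eq_zero.mp (le_antisymm (by simpa using this) (norm_nonneg _))
  have hw_pos : ∀ i j, 0 < r i * s j := fun i j => mul_pos (hr_pos i) (hs_pos j)
  set F : ℂ → ℂ := fun z => ∑ i, ∑ j, a i j * (((r i * s j : ℝ) : ℂ)) ^ (z / 2) with hF_def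
  have hw_ne : ∀ i j, ((r i * s j : ℝ) : ℂ) ≠ 0 :=
    fun i j => Complex.ofReal_ne_zero.mpr (ne_of_gt (hw_pos i j))
  have hdiff : Differentiable ℂ F := by
    apply Differentiable.fun_sum; intro i _
    apply Differentiable.fun_sum; intro j _
    exact ((differentiable_id.div_const 2).const_cpow (Or.inl (hw_ne i j))).const_mul _
  have hF0 : F 0 = 1 := by
    simp only [hF_def, zero_div, Complex.cpow_zero, mul_one]
    rw [Finset.sum_congr rfl (fun i _ => hrow i)]
    rw [← Complex.ofReal_sum, hps, Complex.ofReal_one]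
  have hre2 : ∀ z : ℂ, (z / 2).re = z.re / 2 := fun z => by
    rw [show (2:ℂ) = ((2:ℝ):ℂ) by norm_num, Complex.div_ofReal_re]
  -- general bound via Cauchy-Schwarz hypothesis
  have hFb : ∀ z : ℂ, ‖F z‖ ≤
      Real.sqrt (∑ i, (r i) ^ z.re * p i) * Real.sqrt (∑ j, (s j) ^ z.re * q j) := by
    intro z
    have key : ∀ (x : ℝ), 0 < x → ‖((x : ℝ) : ℂ) ^ (z / 2)‖ ^ 2 = x ^ z.re := by
      intro x hx
      rw [Complex.norm_cpow_eq_rpow_re_of_pos hx, ← Real.rpow_natCast (x ^ (z / 2).re) 2,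
        ← Real.rpow_mul hx.le, hre2, Nat.cast_ofNat, div_mul_cancel₀ _ (two_ne_zero)]
    have hsplit : F z = ∑ i, ∑ j, ((r i : ℝ) : ℂ) ^ (z / 2) * ((s j : ℝ) : ℂ) ^ (z / 2) * a i j := by
      simp only [hF_def]
      refine Finset.sum_congr rfl fun i _ => Finset.sum_congr rfl fun j _ => ?_
      rw [Complex.ofReal_mul, mul_cpow_ofReal_nonneg (hr_pos i).le (hs_pos j).le]
      ring
    rw [hsplit]
    refine (hCS (fun i => ((r i : ℝ) : ℂ) ^ (z / 2)) (fun j => ((s j : ℝ) : ℂ) ^ (z / 2))).trans ?_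
    apply le_of_eq
    congr 1
    · congr 1; exact Finset.sum_congr rfl fun i _ => by rw [key _ (hr_pos i)]
    · congr 1; exact Finset.sum_congr rfl fun j _ => by rw [key _ (hs_pos j)]
  -- bound on Re z = 0
  have hB0 : ∀ z : ℂ, z.re = 0 → ‖F z‖ ≤ 1 := by
    intro z hz
    have := hFb z
    rw [hz] at this
    simpa [Real.rpow_zero, hps, hqs] using this
  -- bound on Re z = 1
  have hB1 : ∀ z : ℂ, z.re = 1 → ‖F z‖ ≤ 1 := by
    intro z hz
    have htri : ‖F z‖ ≤ ∑ i, ∑ j, ‖a i j‖ * ((r i * s j) ^ ((1:ℝ)/2)) := by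
      simp only [hF_def]
      refine (norm_sum_le _ _).trans ?_
      refine Finset.sum_le_sum fun i _ => ?_
      refine (norm_sum_le _ _).trans ?_
      refine Finset.sum_le_sum fun j _ => ?_
      rw [norm_mul, Complex.norm_cpow_eq_rpow_re_of_pos (hw_pos i j), hre2, hz]
    refine htri.trans ?_
    have hterm : ∀ i j, ‖a i j‖ * ((r i * s j) ^ ((1:ℝ)/2)) ≤ p i * q j := by
      intro i j
      by_cases hp : p i = 0
      · rw [ha_p i j hp]; simp [hp]
      by_cases hq : q j = 0
      · rw [ha_q i j hq]; simp [hq]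
      have hppos : 0 < p i := lt_of_le_of_ne (hp0 i) (Ne.symm hp)
      have hqpos : 0 < q j := lt_of_le_of_ne (hq0 j) (Ne.symm hq)
      have hrs : r i * s j = (p i * q j) / (c * c) := by
        simp only [hr_def, hs_def, if_neg hp, if_neg hq]; ring
      have h1 : (r i * s j) ^ ((1:ℝ)/2) = Real.sqrt (p i) * Real.sqrt (q j) / c := by
        rw [hrs, ← Real.sqrt_eq_rpow, Real.sqrt_div (by positivity),
          Real.sqrt_mul (hp0 i), Real.sqrt_mul_self hc.le]
      rw [h1]
      calc ‖a i j‖ * (Real.sqrt (p i) * Real.sqrt (q j) / c)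
          ≤ (c * (Real.sqrt (p i) * Real.sqrt (q j))) * (Real.sqrt (p i) * Real.sqrt (q j) / c) :=
            mul_le_mul_of_nonneg_right (habs i j) (by positivity)
        _ = (Real.sqrt (p i) * Real.sqrt (p i)) * (Real.sqrt (q j) * Real.sqrt (q j)) * (c / c) := by
            ring
        _ = p i * q j := by
            rw [div_self hc.ne', mul_one, Real.mul_self_sqrt (hp0 i), Real.mul_self_sqrt (hq0 j)]
    calc ∑ i, ∑ j, ‖a i j‖ * ((r i * s j) ^ ((1:ℝ)/2))
        ≤ ∑ i, ∑ j, p i * q j := Finset.sum_le_sum fun i _ => Finset.sum_le_sum fun j _ => hterm i j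
      _ = 1 := by rw [← Finset.sum_mul_sum, hps, hqs, one_mul]
  -- boundedness on the strip
  have hBdd : BddAbove ((norm ∘ F) '' Complex.HadamardThreeLines.verticalClosedStrip 0 1) := by
    set B : ℝ := Real.sqrt (∑ i, max 1 (r i) * p i) * Real.sqrt (∑ j, max 1 (s j) * q j) with hBdef
    refine ⟨B, ?_⟩
    rintro x ⟨z, hz, rfl⟩
    simp only [Function.comp_apply]
    refine (hFb z).trans ?_
    have hz' : z.re ∈ Set.Icc (0:ℝ) 1 := hz
    have hpow_le : ∀ (x : ℝ), 0 < x → x ^ z.re ≤ max 1 x := by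
      intro x hx
      rcases le_total x 1 with h | h
      · exact le_trans (Real.rpow_le_one hx.le h hz'.1) (le_max_left _ _)
      · refine le_trans ?_ (le_max_right _ _)
        calc x ^ z.re ≤ x ^ (1:ℝ) := Real.rpow_le_rpow_of_exponent_le h hz'.2
          _ = x := Real.rpow_one x
    refine mul_le_mul ?_ ?_ (Real.sqrt_nonneg _) (Real.sqrt_nonneg _)
    · exact Real.sqrt_le_sqrt (Finset.sum_le_sum fun i _ =>
        mul_le_mul_of_nonneg_right (hpow_le _ (hr_pos i)) (hp0 i))
    · exact Real.sqrt_le_sqrt (Finset.sum_le_sum fun j _ =>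
        mul_le_mul_of_nonneg_right (hpow_le _ (hs_pos j)) (hq0 j))
  -- three lines
  have hF1 : ∀ t : ℝ, t ∈ Set.Icc (0:ℝ) 1 → ‖F t‖ ≤ 1 := by
    intro t ht
    have := Complex.HadamardThreeLines.norm_le_interp_of_mem_verticalClosedStrip' (f := F)
      (z := (t:ℂ)) (a := 1) (b := 1) (l := 0) (u := 1) zero_lt_one (by simp only [Complex.HadamardThreeLines.verticalClosedStrip, Set.mem_preimage, Complex.ofReal_re]; exact ht) (hdiff.diffContOnCl) hBdd
      (fun z hz => hB0 z hz) (fun z hz => hB1 z hz)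
    simpa using this
  -- derivative at 0
  set D : ℂ := ∑ i, ∑ j, a i j * (((r i * s j : ℝ) : ℂ) ^ ((0:ℂ) / 2) *
      Complex.log ((r i * s j : ℝ) : ℂ) * (1 / 2)) with hD_def
  have hD : HasDerivAt F D 0 := by
    apply HasDerivAt.fun_sum; intro i _
    apply HasDerivAt.fun_sum; intro j _
    exact (((hasDerivAt_id (0:ℂ)).div_const 2).const_cpow (Or.inl (hw_ne i j))).const_mul _
  have hDre : D.re ≤ 0 := by
    have hR : HasDerivAt (fun t : ℝ => F t) D 0 := by
      have := hD.comp_ofReal (z := 0)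
      simpa using this
    have hsl : Tendsto (fun t : ℝ => (slope (fun t : ℝ => F t) 0 t).re) (nhdsWithin 0 (Set.Ioi 0))
        (nhds D.re) := by
      refine ((Complex.continuous_re.tendsto D).comp
        ((hasDerivAt_iff_tendsto_slope.mp hR).mono_left (nhdsWithin_mono _ ?_)))
      intro t ht
      exact ne_of_gt ht
    refine le_of_tendsto hsl ?_
    filter_upwards [Ioc_mem_nhdsGT_of_mem (Set.left_mem_Ico.mpr one_pos)] with t ht
    have ht0 : 0 < t := ht.1
    have hFt : (F t).re ≤ 1 := by
      refine le_trans (Complex.re_le_norm _) (hF1 t ⟨ht0.le, ht.2⟩)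
    rw [slope_def_module, Complex.ofReal_zero, hF0, sub_zero, Complex.real_smul,
      Complex.re_ofReal_mul]
    refine mul_nonpos_of_nonneg_of_nonpos (inv_nonneg.mpr ht0.le) ?_
    rw [Complex.sub_re, Complex.one_re]
    linarith
  -- compute D.re
  have hD_re_eq : D.re = ∑ i, ∑ j, (a i j).re * (Real.log (r i * s j) / 2) := by
    rw [hD_def]
    rw [Complex.re_sum]
    refine Finset.sum_congr rfl fun i _ => ?_
    rw [Complex.re_sum]
    refine Finset.sum_congr rfl fun j _ => ?_
    rw [zero_div, Complex.cpow_zero, one_mul]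
    rw [← Complex.ofReal_log (hw_pos i j).le]
    rw [show ((Real.log (r i * s j) : ℂ) * (1/2)) = ((Real.log (r i * s j) / 2 : ℝ) : ℂ) by
      push_cast; ring]
    rw [Complex.re_mul_ofReal]
  -- rearrange
  have hkey : ∑ i, ∑ j, (a i j).re * Real.log (r i * s j) ≤ 0 := by
    have h2 : ∑ i, ∑ j, (a i j).re * (Real.log (r i * s j) / 2)
        = (∑ i, ∑ j, (a i j).re * Real.log (r i * s j)) / 2 := by
      rw [Finset.sum_div]
      refine Finset.sum_congr rfl fun i _ => ?_
      rw [Finset.sum_div]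
      exact Finset.sum_congr rfl fun j _ => by ring
    have := hDre
    rw [hD_re_eq, h2] at this
    linarith
  have hrowre : ∀ i, ∑ j, (a i j).re = p i := by
    intro i
    have := congrArg Complex.re (hrow i)
    rwa [Complex.re_sum, Complex.ofReal_re] at this
  have hcolre : ∀ j, ∑ i, (a i j).re = q j := by
    intro j
    have := congrArg Complex.re (hcol j)
    rwa [Complex.re_sum, Complex.ofReal_re] at this
  have hsplit2 : ∑ i, ∑ j, (a i j).re * Real.log (r i * s j)
      = ∑ i, p i * Real.log (r i) + ∑ j, q j * Real.log (s j) := by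
    have hterm : ∀ i j, (a i j).re * Real.log (r i * s j)
        = (a i j).re * Real.log (r i) + (a i j).re * Real.log (s j) := fun i j => by
      rw [Real.log_mul (hr_pos i).ne' (hs_pos j).ne']; ring
    rw [Finset.sum_congr rfl fun i _ => Finset.sum_congr rfl fun j _ => hterm i j]
    rw [Finset.sum_congr rfl fun (i : Fin m) _ =>
      (Finset.sum_add_distrib (s := Finset.univ)
        (f := fun j => (a i j).re * Real.log (r i)) (g := fun j => (a i j).re * Real.log (s j)))]
    rw [Finset.sum_add_distrib]
    congr 1
    · refine Finset.sum_congr rfl fun i _ => ?_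
      rw [← Finset.sum_mul, hrowre i]
    · rw [Finset.sum_comm]
      refine Finset.sum_congr rfl fun j _ => ?_
      rw [← Finset.sum_mul, hcolre j]
  have hsum_p : ∑ i, p i * Real.log (r i) = ∑ i, p i * Real.log (p i) - Real.log c := by
    rw [show ∑ i, p i * Real.log (p i) - Real.log c
        = ∑ i, (p i * Real.log (p i) - p i * Real.log c) by
      rw [Finset.sum_sub_distrib, ← Finset.sum_mul, hps, one_mul]]
    refine Finset.sum_congr rfl fun i _ => ?_
    by_cases hp : p i = 0
    · have hri : r i = 1 := by simp only [hr_def]; rw [if_pos hp]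
      rw [hri, hp, Real.log_one]; ring
    · have hri : r i = p i / c := by simp only [hr_def]; rw [if_neg hp]
      rw [hri, Real.log_div hp hc.ne']; ring
  have hsum_q : ∑ j, q j * Real.log (s j) = ∑ j, q j * Real.log (q j) - Real.log c := by
    rw [show ∑ j, q j * Real.log (q j) - Real.log c
        = ∑ j, (q j * Real.log (q j) - q j * Real.log c) by
      rw [Finset.sum_sub_distrib, ← Finset.sum_mul, hqs, one_mul]]
    refine Finset.sum_congr rfl fun j _ => ?_
    by_cases hq : q j = 0
    · have hsj : s j = 1 := by simp only [hs_def]; rw [if_pos hq]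
      rw [hsj, hq, Real.log_one]; ring
    · have hsj : s j = q j / c := by simp only [hs_def]; rw [if_neg hq]
      rw [hsj, Real.log_div hq hc.ne']; ring
  rw [hsplit2, hsum_p, hsum_q] at hkey
  linarith


theorem entropic_uncertainty_opNorm
    {H : Type*} [NormedAddCommGroup H] [InnerProductSpace ℂ H] [FiniteDimensional ℂ H]
    {m n : ℕ} (P : Fin m → H →L[ℂ] H) (Q : Fin n → H →L[ℂ] H)
    (hPsa : ∀ i, IsSelfAdjoint (P i)) (hPidem : ∀ i, P i ∘L P i = P i)
    (hQsa : ∀ j, IsSelfAdjoint (Q j)) (hQidem : ∀ j, Q j ∘L Q j = Q j)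
    (hPsum : ∑ i, P i = 1) (hQsum : ∑ j, Q j = 1)
    (ψ : H) (hψ : ‖ψ‖ = 1) :
    (-∑ i, (inner ℂ ψ (P i ψ) : ℂ).re * Real.logb 2 (inner ℂ ψ (P i ψ) : ℂ).re) +
      (-∑ j, (inner ℂ ψ (Q j ψ) : ℂ).re * Real.logb 2 (inner ℂ ψ (Q j ψ) : ℂ).re) ≥
    -2 * Real.logb 2 (sSup {r : ℝ | ∃ i j, r = ‖P i ∘L Q j‖}) := by
  classical
  have hcomp : CompleteSpace H := FiniteDimensional.complete ℂ H
  set S : Set ℝ := {r : ℝ | ∃ i j, r = ‖P i ∘L Q j‖} with hS_def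
  set c : ℝ := sSup S with hc_def
  set p : Fin m → ℝ := fun i => ‖P i ψ‖ ^ 2 with hp_def
  set q : Fin n → ℝ := fun j => ‖Q j ψ‖ ^ 2 with hq_def
  set a : Fin m → Fin n → ℂ := fun i j => (inner ℂ (P i ψ) (Q j ψ) : ℂ) with ha_def
  have hψ0 : ψ ≠ 0 := fun h => by rw [h, norm_zero] at hψ; norm_num at hψ
  have hPP : ∀ i (x : H), P i (P i x) = P i x := fun i x => by
    rw [← ContinuousLinearMap.comp_apply, hPidem i]
  have hQQ : ∀ j (x : H), Q j (Q j x) = Q j x := fun j x => by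
    rw [← ContinuousLinearMap.comp_apply, hQidem j]
  have hSumP : ∀ x : H, ∑ i, P i x = x := fun x => by
    rw [← ContinuousLinearMap.sum_apply, hPsum, ContinuousLinearMap.one_apply]
  have hSumQ : ∀ x : H, ∑ j, Q j x = x := fun x => by
    rw [← ContinuousLinearMap.sum_apply, hQsum, ContinuousLinearMap.one_apply]
  have hp0 : ∀ i, 0 ≤ p i := fun i => sq_nonneg _
  have hq0 : ∀ j, 0 ≤ q j := fun j => sq_nonneg _
  have hps : ∑ i, p i = 1 := by
    have := mu_aux_parseval P hPsa hPidem hPsum ψ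
    rw [hψ] at this; simpa using this
  have hqs : ∑ j, q j = 1 := by
    have := mu_aux_parseval Q hQsa hQidem hQsum ψ
    rw [hψ] at this; simpa using this
  have hrow : ∀ i, ∑ j, a i j = (p i : ℂ) := by
    intro i
    calc ∑ j, a i j = (inner ℂ (P i ψ) (∑ j, Q j ψ) : ℂ) := (inner_sum _ _ _).symm
      _ = (inner ℂ (P i ψ) ψ : ℂ) := by rw [hSumQ]
      _ = (inner ℂ ψ (P i ψ) : ℂ) := mu_aux_sym (P i) (hPsa i) ψ ψ
      _ = (p i : ℂ) := mu_aux_inner_sq (P i) (hPsa i) (hPidem i) ψ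
  have hcol : ∀ j, ∑ i, a i j = (q j : ℂ) := by
    intro j
    calc ∑ i, a i j = (inner ℂ (∑ i, P i ψ) (Q j ψ) : ℂ) := (sum_inner _ _ _).symm
      _ = (inner ℂ ψ (Q j ψ) : ℂ) := by rw [hSumP]
      _ = (q j : ℂ) := mu_aux_inner_sq (Q j) (hQsa j) (hQidem j) ψ
  have hS_eq : S = Set.range (fun ij : Fin m × Fin n => ‖P ij.1 ∘L Q ij.2‖) := by
    ext x
    constructor
    · rintro ⟨i, j, rfl⟩; exact ⟨(i, j), rfl⟩
    · rintro ⟨⟨i, j⟩, rfl⟩; exact ⟨i, j, rfl⟩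
  have hSbdd : BddAbove S := by rw [hS_eq]; exact (Set.finite_range _).bddAbove
  have hcle : ∀ i j, ‖P i ∘L Q j‖ ≤ c := fun i j => le_csSup hSbdd ⟨i, j, rfl⟩
  have ha_eq : ∀ i j, a i j = (inner ℂ (P i ψ) ((P i ∘L Q j) (Q j ψ)) : ℂ) := by
    intro i j
    have h1 : a i j = (inner ℂ (P i (P i ψ)) (Q j (Q j ψ)) : ℂ) := by
      rw [hPP i ψ, hQQ j ψ]
    rw [h1, mu_aux_sym (P i) (hPsa i) (P i ψ) (Q j (Q j ψ))]
    rfl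
  have habs : ∀ i j, ‖a i j‖ ≤ c * (Real.sqrt (p i) * Real.sqrt (q j)) := by
    intro i j
    rw [ha_eq i j]
    have h1 : ‖(inner ℂ (P i ψ) ((P i ∘L Q j) (Q j ψ)) : ℂ)‖ ≤
        ‖P i ψ‖ * ‖(P i ∘L Q j) (Q j ψ)‖ := by
      exact norm_inner_le_norm _ _
    refine h1.trans ?_
    have h2 : ‖(P i ∘L Q j) (Q j ψ)‖ ≤ c * ‖Q j ψ‖ :=
      le_trans (ContinuousLinearMap.le_opNorm _ _)
        (mul_le_mul_of_nonneg_right (hcle i j) (norm_nonneg _))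
    calc ‖P i ψ‖ * ‖(P i ∘L Q j) (Q j ψ)‖ ≤ ‖P i ψ‖ * (c * ‖Q j ψ‖) :=
          mul_le_mul_of_nonneg_left h2 (norm_nonneg _)
      _ = c * (‖P i ψ‖ * ‖Q j ψ‖) := by ring
      _ = c * (Real.sqrt (p i) * Real.sqrt (q j)) := by
          rw [show Real.sqrt (p i) = ‖P i ψ‖ from Real.sqrt_sq (norm_nonneg _),
            show Real.sqrt (q j) = ‖Q j ψ‖ from Real.sqrt_sq (norm_nonneg _)]
  have hc0 : 0 < c := by
    have hqex : ∃ j, q j ≠ 0 := by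
      by_contra h
      push_neg at h
      rw [Finset.sum_eq_zero (fun j _ => h j)] at hqs
      norm_num at hqs
    obtain ⟨j, hqj⟩ := hqex
    have hvj : Q j ψ ≠ 0 := by
      intro h
      exact hqj (by rw [hq_def]; simp [h])
    have hiex : ∃ i, P i (Q j ψ) ≠ 0 := by
      by_contra h
      push_neg at h
      have := hSumP (Q j ψ)
      rw [Finset.sum_eq_zero (fun i _ => h i)] at this
      exact hvj this.symm
    obtain ⟨i, hPi⟩ := hiex
    have h1 : 0 < ‖P i (Q j ψ)‖ := norm_pos_iff.mpr hPi
    have h2 : ‖P i (Q j ψ)‖ ≤ ‖P i ∘L Q j‖ := by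
      have h3 := ContinuousLinearMap.le_opNorm (P i ∘L Q j) ψ
      rw [hψ, mul_one] at h3
      exact h3
    exact lt_of_lt_of_le h1 (h2.trans (hcle i j))
  -- Cauchy-Schwarz with orthogonality
  have hCS : ∀ (lam : Fin m → ℂ) (mu : Fin n → ℂ),
      ‖∑ i, ∑ j, lam i * mu j * a i j‖ ≤
        Real.sqrt (∑ i, ‖lam i‖ ^ 2 * p i) *
        Real.sqrt (∑ j, ‖mu j‖ ^ 2 * q j) := by
    intro lam mu
    set x : H := ∑ i, (starRingEnd ℂ) (lam i) • P i ψ with hx_def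
    set y : H := ∑ j, mu j • Q j ψ with hy_def
    have hxy : ∑ i, ∑ j, lam i * mu j * a i j = (inner ℂ x y : ℂ) := by
      calc (∑ i, ∑ j, lam i * mu j * a i j)
          = ∑ i, lam i * ∑ j, mu j * a i j := by
            refine Finset.sum_congr rfl fun i _ => ?_
            rw [Finset.mul_sum]
            exact Finset.sum_congr rfl fun j _ => by ring
        _ = ∑ i, lam i * (inner ℂ (P i ψ) y : ℂ) := by
            refine Finset.sum_congr rfl fun i _ => ?_
            congr 1
            rw [hy_def, inner_sum]
            exact (Finset.sum_congr rfl fun j _ => (inner_smul_right _ _ _)).symm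
        _ = ∑ i, (inner ℂ ((starRingEnd ℂ) (lam i) • P i ψ) y : ℂ) := by
            refine Finset.sum_congr rfl fun i _ => ?_
            rw [inner_smul_left, Complex.conj_conj]
        _ = (inner ℂ x y : ℂ) := (sum_inner _ _ _).symm
    have hxnorm : ‖x‖ ^ 2 = ∑ i, ‖lam i‖ ^ 2 * p i := by
      have hxx : (inner ℂ x x : ℂ) = ((∑ i, ‖lam i‖ ^ 2 * p i : ℝ) : ℂ) := by
        calc (inner ℂ x x : ℂ)
            = ∑ i, (starRingEnd ℂ) ((starRingEnd ℂ) (lam i)) * (inner ℂ (P i ψ) x : ℂ) := by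
              rw [hx_def, sum_inner]
              exact Finset.sum_congr rfl fun i _ => inner_smul_left _ _ _
          _ = ∑ i, lam i * ((starRingEnd ℂ) (lam i) * (inner ℂ (P i ψ) (P i ψ) : ℂ)) := by
              refine Finset.sum_congr rfl fun i _ => ?_
              rw [Complex.conj_conj]
              congr 1
              rw [hx_def, inner_sum]
              rw [Finset.sum_eq_single i]
              · exact inner_smul_right _ _ _
              · intro k _ hki
                rw [inner_smul_right,
                  mu_aux_orth P hPsa hPidem hPsum ψ (fun h => hki h.symm), mul_zero]
              · intro h; exact absurd (Finset.mem_univ i) h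
          _ = ∑ i, ((‖lam i‖ ^ 2 * p i : ℝ) : ℂ) := by
              refine Finset.sum_congr rfl fun i _ => ?_
              have hu : (inner ℂ (P i ψ) (P i ψ) : ℂ) = ((p i : ℝ) : ℂ) := by
                rw [inner_self_eq_norm_sq_to_K (𝕜 := ℂ)]; simp only [hp_def]; norm_cast
              rw [hu, ← mul_assoc, Complex.mul_conj, ← Complex.ofReal_mul]
              norm_cast
              rw [Complex.sq_norm]
          _ = ((∑ i, ‖lam i‖ ^ 2 * p i : ℝ) : ℂ) := (Complex.ofReal_sum _ _).symm
      have h1 := congrArg Complex.re hxx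
      rw [Complex.ofReal_re] at h1
      rw [← h1]
      rw [inner_self_eq_norm_sq_to_K (𝕜 := ℂ) x]
      norm_cast
    have hynorm : ‖y‖ ^ 2 = ∑ j, ‖mu j‖ ^ 2 * q j := by
      have hyy : (inner ℂ y y : ℂ) = ((∑ j, ‖mu j‖ ^ 2 * q j : ℝ) : ℂ) := by
        calc (inner ℂ y y : ℂ)
            = ∑ j, (starRingEnd ℂ) (mu j) * (inner ℂ (Q j ψ) y : ℂ) := by
              rw [hy_def, sum_inner]
              exact Finset.sum_congr rfl fun j _ => inner_smul_left _ _ _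
          _ = ∑ j, (starRingEnd ℂ) (mu j) * (mu j * (inner ℂ (Q j ψ) (Q j ψ) : ℂ)) := by
              refine Finset.sum_congr rfl fun j _ => ?_
              congr 1
              rw [hy_def, inner_sum]
              rw [Finset.sum_eq_single j]
              · exact inner_smul_right _ _ _
              · intro k _ hkj
                rw [inner_smul_right,
                  mu_aux_orth Q hQsa hQidem hQsum ψ (fun h => hkj h.symm), mul_zero]
              · intro h; exact absurd (Finset.mem_univ j) h
          _ = ∑ j, ((‖mu j‖ ^ 2 * q j : ℝ) : ℂ) := by
              refine Finset.sum_congr rfl fun j _ => ?_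
              have hu : (inner ℂ (Q j ψ) (Q j ψ) : ℂ) = ((q j : ℝ) : ℂ) := by
                rw [inner_self_eq_norm_sq_to_K (𝕜 := ℂ)]; simp only [hq_def]; norm_cast
              rw [hu, ← mul_assoc, mul_comm ((starRingEnd ℂ) (mu j)) (mu j), Complex.mul_conj,
                ← Complex.ofReal_mul]
              norm_cast
              rw [Complex.sq_norm]
          _ = ((∑ j, ‖mu j‖ ^ 2 * q j : ℝ) : ℂ) := (Complex.ofReal_sum _ _).symm
      have h1 := congrArg Complex.re hyy
      rw [Complex.ofReal_re] at h1
      rw [← h1]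
      rw [inner_self_eq_norm_sq_to_K (𝕜 := ℂ) y]
      norm_cast
    rw [hxy]
    calc ‖(inner ℂ x y : ℂ)‖ ≤ ‖x‖ * ‖y‖ := by
          exact norm_inner_le_norm _ _
      _ = Real.sqrt (∑ i, ‖lam i‖ ^ 2 * p i) *
          Real.sqrt (∑ j, ‖mu j‖ ^ 2 * q j) := by
          rw [← hxnorm, ← hynorm, Real.sqrt_sq (norm_nonneg _), Real.sqrt_sq (norm_nonneg _)]
  -- apply the core lemma
  have hcore := mu_core a p q c hc0 hp0 hq0 hps hqs hrow hcol habs hCS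
  -- convert to logb form
  have hreP : ∀ i, (inner ℂ ψ (P i ψ) : ℂ).re = p i := fun i => by
    rw [mu_aux_inner_sq (P i) (hPsa i) (hPidem i) ψ, Complex.ofReal_re]
  have hreQ : ∀ j, (inner ℂ ψ (Q j ψ) : ℂ).re = q j := fun j => by
    rw [mu_aux_inner_sq (Q j) (hQsa j) (hQidem j) ψ, Complex.ofReal_re]
  simp only [hreP, hreQ]
  have hL : 0 < Real.log 2 := Real.log_pos one_lt_two
  rw [ge_iff_le]
  simp only [Real.logb]
  have e1 : ∑ i, p i * (Real.log (p i) / Real.log 2)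
      = (∑ i, p i * Real.log (p i)) / Real.log 2 := by
    rw [Finset.sum_div]; exact Finset.sum_congr rfl fun i _ => by ring
  have e2 : ∑ j, q j * (Real.log (q j) / Real.log 2)
      = (∑ j, q j * Real.log (q j)) / Real.log 2 := by
    rw [Finset.sum_div]; exact Finset.sum_congr rfl fun j _ => by ring
  rw [e1, e2]
  have h5 : (∑ i, p i * Real.log (p i) + ∑ j, q j * Real.log (q j)) / Real.log 2
      ≤ (2 * Real.log c) / Real.log 2 := (div_le_div_iff_of_pos_right hL).mpr hcore
  have h6 : (∑ i, p i * Real.log (p i) + ∑ j, q j * Real.log (q j)) / Real.log 2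
      = (∑ i, p i * Real.log (p i)) / Real.log 2 + (∑ j, q j * Real.log (q j)) / Real.log 2 := by
    ring
  have h7 : (2 * Real.log c) / Real.log 2 = 2 * (Real.log c / Real.log 2) := by ring
  linarith
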